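/- Let q = 2^ϑ with ϑ ∈ ℕ, ϑ > 1. Let W be any 3×ρ matrix over GF(q) with ρ ≥ 2 and let H = f(W) be the corresponding 3q×ρq binary block matrix. Then the binary linear code C = { y ∈ GF(2)^{ρq} : y·Hᵀ = 0 } has minimum distance at most 8; that is, there exists a nonzero vector y with y·Hᵀ = 0 whose Hamming weight is at most 8. -/

import Mathlib

set_option maxHeartbeats 1000000


/-- Let `F = GF(2^ϑ)` with `ϑ > 1`, let `W` be any `3×ρ` matrix over `F`
with `ρ ≥ 2`, and let `H` be the `3q × ρq` binary block matrix whose `((i,r),(j,s))`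
entry is 1 iff `r - s = W i j`. Then the binary code `{y : y·Hᵀ = 0}` has minimum
distance at most 8: there is a nonzero vector `y` with `H.mulVec y = 0` of Hamming
weight at most 8. -/
theorem min_distance_at_most_eight
    {F : Type*} [Field F] [Fintype F] [DecidableEq F]
    (ϑ : ℕ) (hϑ : 1 < ϑ) (hcard : Fintype.card F = 2 ^ ϑ)
    (ρ : ℕ) (hρ : 2 ≤ ρ)
    (W : Fin 3 → Fin ρ → F)
    (H : Matrix (Fin 3 × F) (Fin ρ × F) (ZMod 2))
    (hH : ∀ i r j s, H (i, r) (j, s) = if r - s = W i j then 1 else 0) :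
    ∃ y : Fin ρ × F → ZMod 2, y ≠ 0 ∧ H.mulVec y = 0 ∧
      (Finset.univ.filter (fun c => y c ≠ 0)).card ≤ 8 := by
  -- characteristic 2
  have h2 : ∀ x : F, x + x = 0 := by
    obtain ⟨p, hchar⟩ := CharP.exists F
    haveI := hchar
    obtain ⟨n, hp, hc⟩ := FiniteField.card F p
    have hp2 : p = 2 := by
      have hdvd : p ∣ 2 ^ ϑ := by
        rw [← hcard, hc]; exact dvd_pow_self p n.pos.ne'
      exact (Nat.prime_dvd_prime_iff_eq hp Nat.prime_two).mp (hp.dvd_of_dvd_pow hdvd)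
    subst hp2
    intro x
    have h20 : (2 : F) = 0 := by exact_mod_cast CharP.cast_eq_zero F 2
    calc x + x = 2 * x := by ring
    _ = 0 := by rw [h20, zero_mul]
  set j0 : Fin ρ := ⟨0, by omega⟩ with hj0
  set j1 : Fin ρ := ⟨1, by omega⟩ with hj1
  have hne : j0 ≠ j1 := by
    intro h
    have := congrArg Fin.val h
    simp [hj0, hj1] at this
  set c0 : F := W 0 j0 - W 0 j1 with hc0
  set d1 : F := c0 - (W 1 j0 - W 1 j1) with hd1
  set d2 : F := c0 - (W 2 j0 - W 2 j1) with hd2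
  set S : Finset F := {0, d1, d2, d1 + d2} with hS
  have key : ∀ x v : F, (v = 0 ∨ v = d1 ∨ v = d2) → (x ∈ S ↔ x + v ∈ S) := by
    have fwd : ∀ x v : F, (v = 0 ∨ v = d1 ∨ v = d2) → x ∈ S → x + v ∈ S := by
      intro x v hv hx
      simp only [hS, Finset.mem_insert, Finset.mem_singleton] at hx ⊢
      rcases hv with rfl | rfl | rfl <;> rcases hx with rfl | rfl | rfl | rfl <;>
        first
        | (left; linear_combination)
        | (left; linear_combination h2 d1)
        | (left; linear_combination h2 d2)
        | (right; left; linear_combination)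
        | (right; left; linear_combination h2 d1)
        | (right; left; linear_combination h2 d2)
        | (right; right; left; linear_combination)
        | (right; right; left; linear_combination h2 d1)
        | (right; right; left; linear_combination h2 d2)
        | (right; right; right; linear_combination)
        | (right; right; right; linear_combination h2 d1)
        | (right; right; right; linear_combination h2 d2)
    intro x v hv
    refine ⟨fwd x v hv, fun h => ?_⟩
    have := fwd (x + v) v hv h
    rwa [show x + v + v = x by linear_combination h2 v] at this
  -- the codeword: y (j, s) = 1 iff (j = j0 and s ∈ S) or (j = j1 and s - c0 ∈ S)
  refine ⟨fun c => if c.1 = j0 ∧ c.2 ∈ S then 1 else if c.1 = j1 ∧ c.2 - c0 ∈ S then 1 else 0,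
    ?_, ?_, ?_⟩
  · intro h
    have := congrFun h (j0, (0 : F))
    simp [hS] at this
  · funext x
    obtain ⟨i, r⟩ := x
    have hinner : ∀ j : Fin ρ, (∑ s : F, H (i, r) (j, s) *
        (if j = j0 ∧ s ∈ S then (1 : ZMod 2) else if j = j1 ∧ s - c0 ∈ S then 1 else 0))
        = (if j = j0 ∧ (r - W i j) ∈ S then (1 : ZMod 2)
            else if j = j1 ∧ (r - W i j) - c0 ∈ S then 1 else 0) := by
      intro j
      have step : ∀ s : F, H (i, r) (j, s) *
          (if j = j0 ∧ s ∈ S then (1 : ZMod 2) else if j = j1 ∧ s - c0 ∈ S then 1 else 0)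
          = if s = r - W i j then
              (if j = j0 ∧ s ∈ S then (1 : ZMod 2) else if j = j1 ∧ s - c0 ∈ S then 1 else 0)
            else 0 := by
        intro s
        rw [hH]
        by_cases h : s = r - W i j
        · rw [if_pos (by rw [h]; ring), if_pos h, one_mul]
        · rw [if_neg (fun h' => h (by linear_combination -h')), if_neg h, zero_mul]
      simp only [step]
      rw [Finset.sum_ite_eq' Finset.univ (r - W i j)
        (fun s => if j = j0 ∧ s ∈ S then (1 : ZMod 2) else if j = j1 ∧ s - c0 ∈ S then 1 else 0)]
      simp
    simp only [Matrix.mulVec, dotProduct, Fintype.sum_prod_type, Pi.zero_apply]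
    simp only [hinner]
    rw [← Finset.sum_subset (Finset.subset_univ ({j0, j1} : Finset (Fin ρ)))
      (fun x _ hx => by
        have hx0 : x ≠ j0 ∧ x ≠ j1 := by
          constructor <;> intro h <;> subst h <;> simp at hx
        simp [hx0.1, hx0.2])]
    rw [Finset.sum_pair hne]
    have e0 : (if j0 = j0 ∧ (r - W i j0) ∈ S then (1 : ZMod 2)
        else if j0 = j1 ∧ (r - W i j0) - c0 ∈ S then 1 else 0)
        = if (r - W i j0) ∈ S then 1 else 0 := by
      simp [hne]
    have e1 : (if j1 = j0 ∧ (r - W i j1) ∈ S then (1 : ZMod 2)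
        else if j1 = j1 ∧ (r - W i j1) - c0 ∈ S then 1 else 0)
        = if (r - W i j1) - c0 ∈ S then 1 else 0 := by
      simp [hne.symm]
    rw [e0, e1]
    have hiff : (r - W i j0) ∈ S ↔ (r - W i j1) - c0 ∈ S := by
      have hi : i = 0 ∨ i = 1 ∨ i = 2 := by omega
      rcases hi with rfl | rfl | rfl
      · rw [show r - W 0 j1 - c0 = r - W 0 j0 by rw [hc0]; ring]
      · rw [show r - W 1 j1 - c0 = (r - W 1 j0) + d1 by
          rw [hd1, hc0]; linear_combination h2 (W 1 j0 - W 1 j1 - (W 0 j0 - W 0 j1))]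
        exact key _ d1 (Or.inr (Or.inl rfl))
      · rw [show r - W 2 j1 - c0 = (r - W 2 j0) + d2 by
          rw [hd2, hc0]; linear_combination h2 (W 2 j0 - W 2 j1 - (W 0 j0 - W 0 j1))]
        exact key _ d2 (Or.inr (Or.inr rfl))
    by_cases h : (r - W i j0) ∈ S
    · rw [if_pos h, if_pos (hiff.mp h)]; decide
    · rw [if_neg h, if_neg (fun h' => h (hiff.mpr h')), add_zero]
  · have hsub : (Finset.univ.filter
        (fun c : Fin ρ × F => (if c.1 = j0 ∧ c.2 ∈ S then (1 : ZMod 2)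
          else if c.1 = j1 ∧ c.2 - c0 ∈ S then 1 else 0) ≠ 0))
        ⊆ ({(j0, (0 : F)), (j0, d1), (j0, d2), (j0, d1 + d2),
            (j1, c0), (j1, c0 + d1), (j1, c0 + d2), (j1, c0 + d1 + d2)} :
            Finset (Fin ρ × F)) := by
      rintro ⟨j, s⟩ hc
      simp only [Finset.mem_filter] at hc
      by_cases h1 : j = j0 ∧ s ∈ S
      · obtain ⟨rfl, hs⟩ := h1
        simp only [hS, Finset.mem_insert, Finset.mem_singleton] at hs
        simp only [Finset.mem_insert, Finset.mem_singleton, Prod.mk.injEq]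
        rcases hs with rfl | rfl | rfl | rfl <;> tauto
      · by_cases hb : j = j1 ∧ s - c0 ∈ S
        · obtain ⟨rfl, hs⟩ := hb
          simp only [hS, Finset.mem_insert, Finset.mem_singleton] at hs
          simp only [Finset.mem_insert, Finset.mem_singleton, Prod.mk.injEq]
          rcases hs with h | h | h | h
          · exact Or.inr (Or.inr (Or.inr (Or.inr (Or.inl ⟨trivial, by linear_combination h⟩))))
          · exact Or.inr (Or.inr (Or.inr (Or.inr (Or.inr (Or.inl
              ⟨trivial, by linear_combination h⟩)))))
          · exact Or.inr (Or.inr (Or.inr (Or.inr (Or.inr (Or.inr (Or.inl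
              ⟨trivial, by linear_combination h⟩))))))
          · exact Or.inr (Or.inr (Or.inr (Or.inr (Or.inr (Or.inr (Or.inr
              ⟨trivial, by linear_combination h⟩))))))
        · exact absurd (by simp [if_neg h1, if_neg hb]) hc.2
    refine le_trans (Finset.card_le_card hsub) ?_
    refine (Finset.card_insert_le _ _).trans (Nat.succ_le_succ ?_)
    refine (Finset.card_insert_le _ _).trans (Nat.succ_le_succ ?_)
    refine (Finset.card_insert_le _ _).trans (Nat.succ_le_succ ?_)
    refine (Finset.card_insert_le _ _).trans (Nat.succ_le_succ ?_)
    refine (Finset.card_insert_le _ _).trans (Nat.succ_le_succ ?_)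
    refine (Finset.card_insert_le _ _).trans (Nat.succ_le_succ ?_)
    refine (Finset.card_insert_le _ _).trans (Nat.succ_le_succ ?_)
    simp
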